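/- If J is generated as an A-module by a family {j_λ | λ ∈ Λ}, then the ring homomorphism φ : A[X_λ | λ ∈ Λ] → A ⋈^f J determined by φ(a) = (a, f(a)) for a ∈ A and φ(X_λ) = (0, j_λ) is surjective; hence A ⋈^f J is a homomorphic image of a polynomial ring over A. -/

import Mathlib

set_option synthInstance.maxHeartbeats 1000000
set_option maxHeartbeats 1000000
/-- The amalgamation `A ⋈^f J` of `A` with `B` along `J` with respect to `f`,
as a subring of `A × B`. -/
def Amalg {A B : Type*} [CommRing A] [CommRing B] (f : A →+* B) (J : Ideal B) :
    Subring (A × B) where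
  carrier := {p | ∃ a : A, ∃ j ∈ J, p = (a, f a + j)}
  zero_mem' := ⟨0, 0, J.zero_mem, by simp; rfl⟩
  one_mem' := ⟨1, 0, J.zero_mem, by simp; rfl⟩
  add_mem' := by
    rintro _ _ ⟨a, j, hj, rfl⟩ ⟨a', j', hj', rfl⟩
    exact ⟨a + a', j + j', J.add_mem hj hj', by simp [Prod.ext_iff]; ring⟩
  neg_mem' := by
    rintro _ ⟨a, j, hj, rfl⟩
    exact ⟨-a, -j, J.neg_mem hj, by simp [Prod.ext_iff]; ring⟩
  mul_mem' := by
    rintro _ _ ⟨a, j, hj, rfl⟩ ⟨a', j', hj', rfl⟩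
    refine ⟨a * a', f a * j' + f a' * j + j * j',
      J.add_mem (J.add_mem (J.mul_mem_left _ hj') (J.mul_mem_left _ hj))
        (J.mul_mem_left _ hj'), by simp [Prod.ext_iff]; ring⟩

/-- The amalgamation as a subalgebra of `A × B`, when `B` is an `A`-algebra. -/
def AmalgA (A : Type*) {B : Type*} [CommRing A] [CommRing B] [Algebra A B] (J : Ideal B) :
    Subalgebra A (A × B) :=
  { Amalg (algebraMap A B) J with
    algebraMap_mem' := fun a => ⟨a, 0, J.zero_mem, by simp⟩ }


/-- If `J` is generated as an `A`-module by `{j_λ}`, then `A ⋈^f J` is a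
homomorphic image of the polynomial ring `A[X_λ | λ ∈ Λ]`, via the map sending
`a ↦ (a, f a)` and `X_λ ↦ (0, j_λ)`. -/
theorem amalgamation_quotient_of_polynomialRing {A B : Type*} [CommRing A] [CommRing B]
    [Algebra A B] (J : Ideal B) {Λ : Type*} (j : Λ → B) (hjJ : ∀ l, j l ∈ J)
    (hgen : Submodule.span A (Set.range j) = Submodule.restrictScalars A J) :
    ∃ φ : MvPolynomial Λ A →+* AmalgA A J,
      (∀ a : A, (φ (MvPolynomial.C a) : A × B) = (a, algebraMap A B a)) ∧
      (∀ l : Λ, (φ (MvPolynomial.X l) : A × B) = (0, j l)) ∧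
      Function.Surjective φ := by
  have hXmem : ∀ l : Λ, ((0, j l) : A × B) ∈ AmalgA A J := fun l =>
    ⟨0, j l, hjJ l, by simp⟩
  set φA : MvPolynomial Λ A →ₐ[A] AmalgA A J :=
    MvPolynomial.aeval (fun l => (⟨(0, j l), hXmem l⟩ : AmalgA A J)) with hφA
  have hC : ∀ a : A, (φA (MvPolynomial.C a) : A × B) = (a, algebraMap A B a) := by
    intro a
    have : φA (MvPolynomial.C a) = algebraMap A (AmalgA A J) a := by
      simp [hφA]
    rw [this]; rfl
  have hX : ∀ l : Λ, (φA (MvPolynomial.X l) : A × B) = (0, j l) := by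
    intro l; simp [hφA]
  refine ⟨φA.toRingHom, hC, hX, ?_⟩
  -- surjectivity
  have key : ∀ b ∈ J, ∃ p : MvPolynomial Λ A, (φA p : A × B) = (0, b) := by
    intro b hb
    have hb' : b ∈ Submodule.span A (Set.range j) := by
      rw [hgen]; exact hb
    clear hb
    induction hb' using Submodule.span_induction with
    | mem x hx =>
      obtain ⟨l, rfl⟩ := hx
      exact ⟨MvPolynomial.X l, hX l⟩
    | zero => exact ⟨0, by simp; rfl⟩
    | add x y hx hy ihx ihy =>
      obtain ⟨p, hp⟩ := ihx; obtain ⟨q, hq⟩ := ihy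
      exact ⟨p + q, by push_cast [map_add]; rw [hp, hq]; simp⟩
    | smul a x hx ihx =>
      obtain ⟨p, hp⟩ := ihx
      refine ⟨MvPolynomial.C a * p, ?_⟩
      push_cast [map_mul]
      rw [hp, hC]
      simp [Prod.ext_iff, Algebra.smul_def]
  rintro ⟨⟨x, y⟩, a, jb, hjb, heq⟩
  obtain ⟨p, hp⟩ := key jb hjb
  refine ⟨MvPolynomial.C a + p, ?_⟩
  apply Subtype.ext
  show ((φA (MvPolynomial.C a + p) : AmalgA A J) : A × B) = (x, y)
  push_cast [map_add]
  rw [hp, hC]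
  simp only [Prod.mk.injEq] at heq
  simp [Prod.ext_iff, heq.1, heq.2]
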